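/- Let d ≥ 1, k ≥ 2, ℓ ≥ 1 be integers, ι ≥ 1 a real, and A ≥ 0 a real. Let x_1, …, x_{k−1} ∈ ℝ^d with ‖x_s‖_2 ≤ 1, let y_1, …, y_{k−1} ∈ ℝ, and let θ*, θ ∈ ℝ^d with ‖θ*‖_2 ≤ 1 and ‖θ‖_2 ≤ 1. Set μ = θ − θ*, ε_s(ϑ) = y_s − x_sᵀϑ, and W = 2^{−ℓ}·I_d + Σ_{s=1}^{k−1} min{1, 2^{−ℓ}/|x_sᵀμ|}·x_s x_sᵀ. Assume: (a) for each ϑ ∈ {θ*, θ}: |Σ_{s=1}^{k−1} ⌊x_sᵀμ⌉_ℓ · ε_s(ϑ)| ≤ √(ι · Σ_{s=1}^{k−1} ⌊x_sᵀμ⌉_ℓ² · ε_s(ϑ)²) + 2^{−ℓ}·ι; and (b) Σ_{s=1}^{k−1} ε_s(θ*)² ≤ 8A + ι/16. Then μᵀ W μ ≤ 2^{−ℓ}·√(128·A·ι) + 11·2^{−ℓ}·ι. -/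

import Mathlib

open Matrix Finset

/-- The clipping operator `⌊x⌉_ℓ := min{|x|, 2^{−ℓ}}·x/|x|` (with `0/0 = 0`). -/
noncomputable def clip (ℓ : ℕ) (x : ℝ) : ℝ :=
  min |x| ((2 : ℝ) ^ (-(ℓ : ℤ))) * (x / |x|)

lemma quadform_sum {d : ℕ} (T : Finset ℕ) (M : ℕ → Matrix (Fin d) (Fin d) ℝ) (μ : Fin d → ℝ) :
    μ ⬝ᵥ (∑ s ∈ T, M s) *ᵥ μ = ∑ s ∈ T, μ ⬝ᵥ (M s) *ᵥ μ := by
  simp only [Matrix.mulVec, dotProduct, Finset.sum_apply, Matrix.sum_apply,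
    Finset.mul_sum, Finset.sum_mul]
  refine Eq.trans (Finset.sum_congr rfl fun i _ => Finset.sum_comm) Finset.sum_comm

lemma quadform_vecMulVec {d : ℕ} (x μ : Fin d → ℝ) :
    μ ⬝ᵥ (Matrix.vecMulVec x x) *ᵥ μ = (x ⬝ᵥ μ)^2 := by
  simp only [Matrix.mulVec, Matrix.vecMulVec_apply, dotProduct, sq, Finset.mul_sum]
  have h : ∀ j, (∑ i, x i * μ i) * (x j * μ j) = ∑ i, μ i * (x i * x j * μ j) := by
    intro j; rw [Finset.sum_mul]; exact Finset.sum_congr rfl fun i _ => by ring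
  simp_rw [h]
  exact Finset.sum_comm

lemma sqrt_sum_sq_add_le (T : Finset ℕ) (a b : ℕ → ℝ) :
    Real.sqrt (∑ i ∈ T, (a i + b i)^2) ≤
      Real.sqrt (∑ i ∈ T, (a i)^2) + Real.sqrt (∑ i ∈ T, (b i)^2) := by
  have hA : (0:ℝ) ≤ ∑ i ∈ T, (a i)^2 := Finset.sum_nonneg fun _ _ => sq_nonneg _
  have hB : (0:ℝ) ≤ ∑ i ∈ T, (b i)^2 := Finset.sum_nonneg fun _ _ => sq_nonneg _
  have hcs := Real.sum_mul_le_sqrt_mul_sqrt T a b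
  have key : ∑ i ∈ T, (a i + b i)^2
      ≤ (Real.sqrt (∑ i ∈ T, (a i)^2) + Real.sqrt (∑ i ∈ T, (b i)^2))^2 := by
    have h1 : ∑ i ∈ T, (a i + b i)^2
        = ∑ i ∈ T, (a i)^2 + 2*(∑ i ∈ T, a i * b i) + ∑ i ∈ T, (b i)^2 := by
      rw [Finset.mul_sum, ← Finset.sum_add_distrib, ← Finset.sum_add_distrib]
      exact Finset.sum_congr rfl fun i _ => by ring
    rw [h1, add_sq, Real.sq_sqrt hA, Real.sq_sqrt hB]
    nlinarith [Real.sqrt_nonneg (∑ i ∈ T, (a i)^2), Real.sqrt_nonneg (∑ i ∈ T, (b i)^2)]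
  calc Real.sqrt (∑ i ∈ T, (a i + b i)^2)
      ≤ Real.sqrt ((Real.sqrt (∑ i ∈ T, (a i)^2) + Real.sqrt (∑ i ∈ T, (b i)^2))^2) :=
        Real.sqrt_le_sqrt key
    _ = _ := Real.sqrt_sq (by positivity)

lemma clip_mul_self (ℓ : ℕ) (u : ℝ) :
    clip ℓ u * u = min |u| ((2:ℝ)^(-(ℓ:ℤ))) * |u| := by
  rcases eq_or_ne u 0 with h | h
  · simp [clip, h]
  · have h2 : |u| ≠ 0 := abs_ne_zero.2 h
    have h3 : u / |u| * u = |u| := by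
      rw [div_mul_eq_mul_div, ← abs_mul_abs_self u, mul_div_assoc, div_self h2, mul_one]
    rw [clip, mul_assoc, h3]

lemma clip_sq_le (ℓ : ℕ) (u : ℝ) :
    (clip ℓ u)^2 ≤ (min |u| ((2:ℝ)^(-(ℓ:ℤ))))^2 := by
  rcases eq_or_ne u 0 with h | h
  · simp [clip, h]
  · have h2 : |u| ≠ 0 := abs_ne_zero.2 h
    have h3 : u^2 / |u|^2 = 1 := by rw [sq_abs]; exact div_self (by positivity)
    rw [clip, mul_pow, div_pow, h3, mul_one]

/-- Deterministic property (i) of the VOFUL2 confidence set: with `μ = θ − θ*`,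
`ε s ϑ = y s − x sᵀϑ`, and
`W = 2^{−ℓ}·I + ∑_{s=1}^{k−1} min{1, 2^{−ℓ}/|x sᵀμ|}·x s (x s)ᵀ`
(the weight taken to be `1` when `x sᵀμ = 0`), assuming
(a) for each `ϑ ∈ {θ*, θ}`,
  `|∑ s ∈ Finset.Icc 1 (k-1), ⌊x sᵀμ⌉_ℓ · ε s ϑ| ≤ √(ι·∑ ⌊x sᵀμ⌉_ℓ²·(ε s ϑ)²) + 2^{−ℓ}·ι`,
(b) `∑ (ε s θ*)² ≤ 8A + ι/16`,
we have `μᵀWμ ≤ 2^{−ℓ}·√(128·A·ι) + 11·2^{−ℓ}·ι`. -/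
theorem voful2_confidence_property_one
    (d k ℓ : ℕ) (hd : 1 ≤ d) (hk : 2 ≤ k) (hℓ : 1 ≤ ℓ)
    (ι : ℝ) (hι : 1 ≤ ι) (A : ℝ) (hA : 0 ≤ A)
    (x : ℕ → EuclideanSpace ℝ (Fin d))
    (hx : ∀ s ∈ Finset.Icc 1 (k - 1), ‖x s‖ ≤ 1)
    (y : ℕ → ℝ)
    (θstar θ : EuclideanSpace ℝ (Fin d)) (hθstar : ‖θstar‖ ≤ 1) (hθ : ‖θ‖ ≤ 1)
    (μ : EuclideanSpace ℝ (Fin d)) (hμ : μ = θ - θstar)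
    (ε : ℕ → EuclideanSpace ℝ (Fin d) → ℝ)
    (hε : ∀ s ϑ, ε s ϑ = y s - x s ⬝ᵥ ϑ)
    (W : Matrix (Fin d) (Fin d) ℝ)
    (hW : W = (2 : ℝ) ^ (-(ℓ : ℤ)) • (1 : Matrix (Fin d) (Fin d) ℝ)
        + ∑ s ∈ Finset.Icc 1 (k - 1),
            (if x s ⬝ᵥ μ = 0 then 1
              else min 1 ((2 : ℝ) ^ (-(ℓ : ℤ)) / |x s ⬝ᵥ μ|)) • Matrix.vecMulVec (x s) (x s))
    (ha : ∀ ϑ ∈ ({θstar, θ} : Set (EuclideanSpace ℝ (Fin d))),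
        |∑ s ∈ Finset.Icc 1 (k - 1), clip ℓ (x s ⬝ᵥ μ) * ε s ϑ| ≤
          Real.sqrt (ι * ∑ s ∈ Finset.Icc 1 (k - 1), (clip ℓ (x s ⬝ᵥ μ)) ^ 2 * (ε s ϑ) ^ 2)
            + (2 : ℝ) ^ (-(ℓ : ℤ)) * ι)
    (hb : ∑ s ∈ Finset.Icc 1 (k - 1), (ε s θstar) ^ 2 ≤ 8 * A + ι / 16) :
    μ ⬝ᵥ W *ᵥ μ ≤ (2 : ℝ) ^ (-(ℓ : ℤ)) * Real.sqrt (128 * A * ι)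
      + 11 * (2 : ℝ) ^ (-(ℓ : ℤ)) * ι := by
  have hι0 : (0:ℝ) ≤ ι := le_trans zero_le_one hι
  set c : ℝ := (2:ℝ)^(-(ℓ:ℤ)) with hcdef
  have hc0 : (0:ℝ) < c := by positivity
  set T : Finset ℕ := Finset.Icc 1 (k-1) with hTdef
  -- dot product equals inner product
  have hdotinner : ∀ a b : EuclideanSpace ℝ (Fin d), a ⬝ᵥ b = (inner ℝ a b : ℝ) := by
    intro a b
    simp [dotProduct, PiLp.inner_apply, RCLike.inner_apply, mul_comm]
  have hμnorm : ‖μ‖ ≤ 2 := by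
    rw [hμ]
    calc ‖θ - θstar‖ ≤ ‖θ‖ + ‖θstar‖ := norm_sub_le _ _
    _ ≤ 2 := by linarith
  have hμdot : μ ⬝ᵥ μ ≤ 4 := by
    rw [hdotinner, real_inner_self_eq_norm_sq]
    nlinarith [norm_nonneg μ]
  have ht2 : ∀ s ∈ T, |x s ⬝ᵥ μ| ≤ 2 := by
    intro s hs
    rw [hdotinner]
    calc |(inner ℝ (x s) μ : ℝ)| ≤ ‖x s‖ * ‖μ‖ := abs_real_inner_le_norm _ _
    _ ≤ 1 * 2 := mul_le_mul (hx s hs) hμnorm (norm_nonneg _) zero_le_one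
    _ = 2 := by norm_num
  have hεdiff : ∀ s, ε s θstar - ε s θ = x s ⬝ᵥ μ := by
    intro s
    simp only [hε, hμ]
    simp [dotProduct, PiLp.sub_apply, mul_sub, Finset.sum_sub_distrib]
  -- basic clip facts
  have hclipnn : ∀ u : ℝ, 0 ≤ clip ℓ u * u := by
    intro u
    rw [clip_mul_self]
    exact mul_nonneg (le_min (abs_nonneg u) hc0.le) (abs_nonneg u)
  have hclipsq : ∀ u : ℝ, (clip ℓ u)^2 ≤ c^2 := by
    intro u
    refine le_trans (clip_sq_le ℓ u) ?_
    exact pow_le_pow_left₀ (le_min (abs_nonneg u) hc0.le) (min_le_right _ _) 2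
  set S : ℝ := ∑ s ∈ T, clip ℓ (x s ⬝ᵥ μ) * (x s ⬝ᵥ μ) with hSdef
  have hS0 : 0 ≤ S := Finset.sum_nonneg fun s _ => hclipnn _
  have hterm2c : ∀ s ∈ T, clip ℓ (x s ⬝ᵥ μ) * (x s ⬝ᵥ μ) ≤ 2*c := by
    intro s hs
    rw [clip_mul_self]
    calc min |x s ⬝ᵥ μ| c * |x s ⬝ᵥ μ| ≤ c * 2 :=
      mul_le_mul (min_le_right _ _) (ht2 s hs) (abs_nonneg _) hc0.le
    _ = 2*c := by ring
  -- quadratic form identity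
  have hquad : μ ⬝ᵥ W *ᵥ μ = c * (μ ⬝ᵥ μ) + S := by
    rw [hW, Matrix.add_mulVec, dotProduct_add, Matrix.smul_mulVec,
      Matrix.one_mulVec, dotProduct_smul, quadform_sum, smul_eq_mul]
    congr 1
    rw [hSdef]
    refine Finset.sum_congr rfl fun s hs => ?_
    rw [Matrix.smul_mulVec, dotProduct_smul, smul_eq_mul, quadform_vecMulVec]
    rcases eq_or_ne (x s ⬝ᵥ μ) 0 with h | h
    · simp [h, clip]
    · have habs : 0 < |x s ⬝ᵥ μ| := abs_pos.2 h
      rw [if_neg h, clip_mul_self]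
      rcases le_total |x s ⬝ᵥ μ| c with hle | hle
      · rw [min_eq_left hle, min_eq_left ((one_le_div habs).2 hle), one_mul,
          abs_mul_abs_self, ← pow_two]
      · rw [min_eq_right ((div_le_one habs).2 hle), min_eq_right hle, pow_two,
          ← abs_mul_abs_self (x s ⬝ᵥ μ), div_mul_eq_mul_div]
        field_simp
  -- specialize hypothesis (a)
  have hastar := ha θstar (Set.mem_insert _ _)
  have haθ := ha θ (Set.mem_insert_of_mem _ rfl)
  set Pstar : ℝ := ∑ s ∈ T, (clip ℓ (x s ⬝ᵥ μ))^2 * (ε s θstar)^2 with hPstardef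
  set Pθ : ℝ := ∑ s ∈ T, (clip ℓ (x s ⬝ᵥ μ))^2 * (ε s θ)^2 with hPθdef
  set Q : ℝ := ∑ s ∈ T, (clip ℓ (x s ⬝ᵥ μ))^2 * (x s ⬝ᵥ μ)^2 with hQdef
  have hPstar0 : 0 ≤ Pstar :=
    Finset.sum_nonneg fun s _ => mul_nonneg (sq_nonneg _) (sq_nonneg _)
  have hQ0 : 0 ≤ Q := Finset.sum_nonneg fun s _ => mul_nonneg (sq_nonneg _) (sq_nonneg _)
  -- bound on Pstar
  have hPb : Pstar ≤ c^2 * (8*A + ι/16) := by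
    calc Pstar ≤ ∑ s ∈ T, c^2 * (ε s θstar)^2 :=
          Finset.sum_le_sum fun s _ => mul_le_mul_of_nonneg_right (hclipsq _) (sq_nonneg _)
    _ = c^2 * ∑ s ∈ T, (ε s θstar)^2 := (Finset.mul_sum _ _ _).symm
    _ ≤ c^2 * (8*A + ι/16) := mul_le_mul_of_nonneg_left hb (by positivity)
  -- bound on Q
  have hQb : Q ≤ 2*c*S := by
    rw [hQdef, hSdef, Finset.mul_sum]
    refine Finset.sum_le_sum fun s hs => ?_
    have h1 : (clip ℓ (x s ⬝ᵥ μ))^2 * (x s ⬝ᵥ μ)^2 = (clip ℓ (x s ⬝ᵥ μ) * (x s ⬝ᵥ μ))^2 := by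
      ring
    rw [h1]
    nlinarith [hclipnn (x s ⬝ᵥ μ), hterm2c s hs]
  -- sqrt facts
  set R : ℝ := Real.sqrt (8*A*ι) with hRdef
  have hR0 : 0 ≤ R := Real.sqrt_nonneg _
  have hRsq : R^2 = 8*A*ι := Real.sq_sqrt (by positivity)
  have h128 : Real.sqrt (128*A*ι) = 4*R := by
    rw [hRdef, show (128:ℝ)*A*ι = 4^2*(8*A*ι) by ring,
      Real.sqrt_mul (by positivity), Real.sqrt_sq (by norm_num)]
  have hsqrtPstar : Real.sqrt (ι * Pstar) ≤ c*R + c*ι/4 := by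
    have h1 : ι * Pstar ≤ (c*R + c*ι/4)^2 := by
      have key : ι * Pstar ≤ ι * (c^2*(8*A + ι/16)) := mul_le_mul_of_nonneg_left hPb hι0
      have e : (c*R)^2 + (c*ι/4)^2 = ι * (c^2*(8*A + ι/16)) := by
        rw [mul_pow, hRsq]; ring
      have hab : 0 ≤ (c*R)*(c*ι/4) := by positivity
      have expand : (c*R + c*ι/4)^2 = (c*R)^2 + 2*((c*R)*(c*ι/4)) + (c*ι/4)^2 := by ring
      linarith
    calc Real.sqrt (ι*Pstar) ≤ Real.sqrt ((c*R + c*ι/4)^2) := Real.sqrt_le_sqrt h1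
    _ = c*R + c*ι/4 := Real.sqrt_sq (by positivity)
  -- triangle inequality in ℓ²
  have htri : Real.sqrt Pθ ≤ Real.sqrt Pstar + Real.sqrt Q := by
    have h := sqrt_sum_sq_add_le T (fun s => clip ℓ (x s ⬝ᵥ μ) * ε s θstar)
        (fun s => -(clip ℓ (x s ⬝ᵥ μ) * (x s ⬝ᵥ μ)))
    have e1 : ∑ s ∈ T, (clip ℓ (x s ⬝ᵥ μ) * ε s θstar
        + -(clip ℓ (x s ⬝ᵥ μ) * (x s ⬝ᵥ μ)))^2 = Pθ := by
      rw [hPθdef]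
      refine Finset.sum_congr rfl fun s _ => ?_
      have h2 : ε s θ = ε s θstar - (x s ⬝ᵥ μ) := by have := hεdiff s; linarith
      rw [h2]; ring
    have e2 : ∑ s ∈ T, (clip ℓ (x s ⬝ᵥ μ) * ε s θstar)^2 = Pstar := by
      rw [hPstardef]; exact Finset.sum_congr rfl fun s _ => by ring
    have e3 : ∑ s ∈ T, (-(clip ℓ (x s ⬝ᵥ μ) * (x s ⬝ᵥ μ)))^2 = Q := by
      rw [hQdef]; exact Finset.sum_congr rfl fun s _ => by ring
    rwa [e1, e2, e3] at h
  have hsqrtPθ : Real.sqrt (ι * Pθ) ≤ Real.sqrt (ι*Pstar) + Real.sqrt (ι*Q) := by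
    rw [Real.sqrt_mul hι0, Real.sqrt_mul hι0, Real.sqrt_mul hι0, ← mul_add]
    exact mul_le_mul_of_nonneg_left htri (Real.sqrt_nonneg ι)
  have hsqrtQ : Real.sqrt (ι*Q) ≤ (2*c*ι + S)/2 := by
    have h1 : ι*Q ≤ (2*c*ι) * S := by
      calc ι*Q ≤ ι*(2*c*S) := mul_le_mul_of_nonneg_left hQb hι0
      _ = (2*c*ι) * S := by ring
    calc Real.sqrt (ι*Q) ≤ Real.sqrt ((2*c*ι) * S) := Real.sqrt_le_sqrt h1
    _ ≤ Real.sqrt (((2*c*ι + S)/2)^2) := Real.sqrt_le_sqrt (by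
        have e : ((2*c*ι + S)/2)^2 = (2*c*ι)*S + ((2*c*ι - S)/2)^2 := by ring
        linarith [sq_nonneg ((2*c*ι - S)/2)])
    _ = (2*c*ι + S)/2 := Real.sqrt_sq (by
        have := mul_nonneg hc0.le hι0
        linarith)
  -- decompose S
  have hSsplit : S = (∑ s ∈ T, clip ℓ (x s ⬝ᵥ μ) * ε s θstar)
      - (∑ s ∈ T, clip ℓ (x s ⬝ᵥ μ) * ε s θ) := by
    rw [hSdef, ← Finset.sum_sub_distrib]
    refine Finset.sum_congr rfl fun s _ => ?_
    rw [← mul_sub, hεdiff s]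
  have hSabs : S ≤ |∑ s ∈ T, clip ℓ (x s ⬝ᵥ μ) * ε s θstar|
      + |∑ s ∈ T, clip ℓ (x s ⬝ᵥ μ) * ε s θ| := by
    rw [hSsplit]
    exact le_trans (le_abs_self _) (abs_sub _ _)
  -- combine everything
  have hSfinal : S ≤ 4*c*R + 7*c*ι := by
    have c1 := hastar
    have c2 := haθ
    have c3 : Real.sqrt (ι * Pθ) ≤ (c*R + c*ι/4) + (2*c*ι + S)/2 :=
      le_trans hsqrtPθ (add_le_add hsqrtPstar hsqrtQ)
    linarith
  rw [hquad, h128]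
  have h4 : c * (μ ⬝ᵥ μ) ≤ c * 4 := mul_le_mul_of_nonneg_left hμdot hc0.le
  have h5 : c ≤ c * ι := le_mul_of_one_le_right hc0.le hι
  linarith
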